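/- Let X be a complex Banach space and Γ a set of bounded linear operators on X such that TS ∈ Γ whenever T, S ∈ Γ. Let (λ_T)_{T∈Γ} be a family of unimodular complex numbers (|λ_T| = 1) which is multiplicative, i.e., λ_{TS} = λ_T λ_S for all T, S ∈ Γ. Then a vector x ∈ X is a recurrent vector for Γ if and only if x is a recurrent vector for Γ₁ := { λ_T T : T ∈ Γ }. -/

import Mathlib

open Filter Topology

lemma exists_pow_near_one (μ : ℂ) (hμ : ‖μ‖ = 1) {δ : ℝ} (hδ : 0 < δ) :
    ∃ m : ℕ, 1 ≤ m ∧ ‖μ ^ m - 1‖ < δ := by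
  have hmem : ∀ n : ℕ, μ ^ (n + 1) ∈ Metric.sphere (0 : ℂ) 1 := by
    intro n
    simp [mem_sphere_zero_iff_norm, norm_pow, hμ]
  obtain ⟨c, -, g, hg, hgc⟩ := (isCompact_sphere (0 : ℂ) 1).tendsto_subseq hmem
  have hcauchy := hgc.cauchySeq
  rw [Metric.cauchySeq_iff] at hcauchy
  obtain ⟨N, hN⟩ := hcauchy δ hδ
  have hlt : g N < g (N + 1) := hg (Nat.lt_succ_self N)
  refine ⟨g (N + 1) - g N, by omega, ?_⟩
  have hd := hN (N + 1) (by omega) N (by omega)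
  have hsplit : μ ^ (g (N + 1) + 1) = μ ^ (g N + 1) * μ ^ (g (N + 1) - g N) := by
    rw [← pow_add]; congr 1; omega
  have : dist (μ ^ (g (N + 1) + 1)) (μ ^ (g N + 1))
      = ‖μ ^ (g (N + 1) - g N) - 1‖ := by
    rw [Complex.dist_eq, hsplit]
    have : μ ^ (g N + 1) * μ ^ (g (N + 1) - g N) - μ ^ (g N + 1)
        = μ ^ (g N + 1) * (μ ^ (g (N + 1) - g N) - 1) := by ring
    rw [this, norm_mul, norm_pow, hμ, one_pow, one_mul]
  rw [← this]; exact hd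

section Key

variable {X : Type*} [NormedAddCommGroup X] [NormedSpace ℂ X]

lemma key_claim (Γ : Set (X →L[ℂ] X))
    (hΓ : ∀ T ∈ Γ, ∀ S ∈ Γ, T * S ∈ Γ)
    (φ ψ : (X →L[ℂ] X) → ℂ)
    (hφmod : ∀ T ∈ Γ, ‖φ T‖ = 1)
    (hφmul : ∀ T ∈ Γ, ∀ S ∈ Γ, φ (T * S) = φ T * φ S)
    (hψmod : ∀ T ∈ Γ, ‖ψ T‖ = 1)
    (hψmul : ∀ T ∈ Γ, ∀ S ∈ Γ, ψ (T * S) = ψ T * ψ S)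
    (x : X) (u : ℕ → X →L[ℂ] X) (hu : ∀ k, u k ∈ Γ)
    (hconv : Tendsto (fun k => ψ (u k) • u k x) atTop (𝓝 x)) :
    ∀ ε > 0, ∃ T ∈ Γ, ‖ψ T • T x - x‖ < ε ∧ ‖φ T - 1‖ < ε := by
  -- extract a subsequence along which φ converges to some μ on the circle
  have hmem : ∀ k, φ (u k) ∈ Metric.sphere (0 : ℂ) 1 := by
    intro k
    simp [mem_sphere_zero_iff_norm, hφmod _ (hu k)]
  obtain ⟨μ, hμmem, g, hg, hgc⟩ := (isCompact_sphere (0 : ℂ) 1).tendsto_subseq hmem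
  have hμ : ‖μ‖ = 1 := by
    simpa [mem_sphere_zero_iff_norm] using hμmem
  have hconv' : Tendsto (fun j => ψ (u (g j)) • u (g j) x) atTop (𝓝 x) :=
    hconv.comp hg.tendsto_atTop
  -- basic approximation step
  have H : ∀ δ > (0:ℝ), ∃ T ∈ Γ, ‖ψ T • T x - x‖ < δ ∧ ‖φ T - μ‖ < δ := by
    intro δ hδ
    have h1 : ∀ᶠ j in atTop, dist (ψ (u (g j)) • u (g j) x) x < δ :=
      hconv' (Metric.ball_mem_nhds x hδ)
    have h2 : ∀ᶠ j in atTop, dist (φ (u (g j))) μ < δ :=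
      hgc (Metric.ball_mem_nhds μ hδ)
    obtain ⟨j, hj1, hj2⟩ := (h1.and h2).exists
    exact ⟨u (g j), hu (g j), by rwa [dist_eq_norm] at hj1, by rwa [Complex.dist_eq] at hj2⟩
  -- products: approximate powers of μ
  have P : ∀ m : ℕ, ∀ δ > (0:ℝ), ∃ T ∈ Γ,
      ‖ψ T • T x - x‖ < δ ∧ ‖φ T - μ ^ (m + 1)‖ < δ := by
    intro m
    induction m with
    | zero => simpa using H
    | succ m ih =>
      intro δ hδ
      obtain ⟨T, hT, h1, h2⟩ := ih (δ / 2) (by positivity)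
      obtain ⟨S, hS, h3, h4⟩ := H (min (δ / 2) (δ / (2 * (‖T‖ + 1)))) (by positivity)
      refine ⟨T * S, hΓ _ hT _ hS, ?_, ?_⟩
      · have hid : ψ (T * S) • (T * S) x - x
            = ψ T • (T (ψ S • S x - x)) + (ψ T • T x - x) := by
          rw [hψmul _ hT _ hS]
          simp [ContinuousLinearMap.mul_apply, map_sub, map_smul, smul_smul, smul_sub]
          try abel
        rw [hid]
        have hb1 : ‖ψ T • (T (ψ S • S x - x))‖ ≤ ‖T‖ * ‖ψ S • S x - x‖ := by
          rw [norm_smul, hψmod _ hT, one_mul]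
          exact T.le_opNorm _
        have hb2 : ‖T‖ * ‖ψ S • S x - x‖ < δ / 2 := by
          have h3' : ‖ψ S • S x - x‖ < δ / (2 * (‖T‖ + 1)) :=
            lt_of_lt_of_le h3 (min_le_right _ _)
          have hTn : (0:ℝ) ≤ ‖T‖ := norm_nonneg _
          have hvn : (0:ℝ) ≤ ‖ψ S • S x - x‖ := norm_nonneg _
          have hpos : (0:ℝ) < ‖T‖ + 1 := by positivity
          have h5 : (‖T‖ + 1) * ‖ψ S • S x - x‖ < (‖T‖ + 1) * (δ / (2 * (‖T‖ + 1))) :=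
            mul_lt_mul_of_pos_left h3' hpos
          have heq : (‖T‖ + 1) * (δ / (2 * (‖T‖ + 1))) = δ / 2 := by
            field_simp
          nlinarith
        calc ‖ψ T • (T (ψ S • S x - x)) + (ψ T • T x - x)‖
            ≤ ‖ψ T • (T (ψ S • S x - x))‖ + ‖ψ T • T x - x‖ := norm_add_le _ _
          _ < δ / 2 + δ / 2 := by
              have := lt_of_le_of_lt hb1 hb2
              linarith
          _ = δ := by ring
      · have hid2 : φ (T * S) - μ ^ (m + 1 + 1)
            = φ T * (φ S - μ) + μ * (φ T - μ ^ (m + 1)) := by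
          rw [hφmul _ hT _ hS]; ring
        rw [hid2]
        calc ‖φ T * (φ S - μ) + μ * (φ T - μ ^ (m + 1))‖
            ≤ ‖φ T * (φ S - μ)‖ + ‖μ * (φ T - μ ^ (m + 1))‖ :=
              norm_add_le _ _
          _ = ‖φ S - μ‖ + ‖φ T - μ ^ (m + 1)‖ := by
              rw [norm_mul, norm_mul, hφmod _ hT, hμ, one_mul, one_mul]
          _ < δ / 2 + δ / 2 := by
              have h4' : ‖φ S - μ‖ < δ / 2 :=
                lt_of_lt_of_le h4 (min_le_left _ _)
              linarith
          _ = δ := by ring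
  -- conclude
  intro ε hε
  obtain ⟨m, hm1, hm2⟩ := exists_pow_near_one μ hμ (show (0:ℝ) < ε / 2 by positivity)
  obtain ⟨T, hT, h1, h2⟩ := P (m - 1) (ε / 2) (by positivity)
  have hmm : m - 1 + 1 = m := by omega
  rw [hmm] at h2
  refine ⟨T, hT, by linarith, ?_⟩
  calc ‖φ T - 1‖ ≤ ‖φ T - μ ^ m‖ + ‖μ ^ m - 1‖ := by
        have : φ T - 1 = (φ T - μ ^ m) + (μ ^ m - 1) := by ring
        rw [this]; exact norm_add_le _ _
    _ < ε / 2 + ε / 2 := by linarith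
    _ = ε := by ring

lemma key (Γ : Set (X →L[ℂ] X))
    (hΓ : ∀ T ∈ Γ, ∀ S ∈ Γ, T * S ∈ Γ)
    (φ ψ : (X →L[ℂ] X) → ℂ)
    (hφmod : ∀ T ∈ Γ, ‖φ T‖ = 1)
    (hφmul : ∀ T ∈ Γ, ∀ S ∈ Γ, φ (T * S) = φ T * φ S)
    (hψmod : ∀ T ∈ Γ, ‖ψ T‖ = 1)
    (hψmul : ∀ T ∈ Γ, ∀ S ∈ Γ, ψ (T * S) = ψ T * ψ S)
    (x : X) (u : ℕ → X →L[ℂ] X) (hu : ∀ k, u k ∈ Γ)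
    (hconv : Tendsto (fun k => ψ (u k) • u k x) atTop (𝓝 x)) :
    ∃ S : ℕ → X →L[ℂ] X, (∀ k, S k ∈ Γ) ∧
      Tendsto (fun k => (φ (S k) * ψ (S k)) • S k x) atTop (𝓝 x) := by
  have hc := key_claim Γ hΓ φ ψ hφmod hφmul hψmod hψmul x u hu hconv
  have h : ∀ k : ℕ, ∃ T, T ∈ Γ ∧ ‖ψ T • T x - x‖ < 1 / (k + 1) ∧
      ‖φ T - 1‖ < 1 / (k + 1) := by
    intro k
    obtain ⟨T, hT, h1, h2⟩ := hc (1 / (k + 1)) (by positivity)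
    exact ⟨T, hT, h1, h2⟩
  choose S hSΓ hS1 hS2 using h
  refine ⟨S, hSΓ, ?_⟩
  rw [tendsto_iff_norm_sub_tendsto_zero]
  have hb : ∀ k : ℕ, ‖(φ (S k) * ψ (S k)) • S k x - x‖ ≤ (1 + ‖x‖) * (1 / (k + 1)) := by
    intro k
    have hid : (φ (S k) * ψ (S k)) • S k x - x
        = φ (S k) • (ψ (S k) • S k x - x) + (φ (S k) - 1) • x := by
      rw [smul_sub, sub_smul, one_smul, smul_smul]
      abel
    rw [hid]
    calc ‖φ (S k) • (ψ (S k) • S k x - x) + (φ (S k) - 1) • x‖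
        ≤ ‖φ (S k) • (ψ (S k) • S k x - x)‖ + ‖(φ (S k) - 1) • x‖ := norm_add_le _ _
      _ = ‖ψ (S k) • S k x - x‖ + ‖φ (S k) - 1‖ * ‖x‖ := by
          rw [norm_smul, norm_smul,
            hφmod _ (hSΓ k), one_mul]
      _ ≤ 1 / (k + 1) + (1 / (k + 1)) * ‖x‖ := by
          have := hS1 k
          have := hS2 k
          have hxn : (0:ℝ) ≤ ‖x‖ := norm_nonneg _
          nlinarith
      _ = (1 + ‖x‖) * (1 / (k + 1)) := by ring
  have hg : Tendsto (fun k : ℕ => (1 + ‖x‖) * (1 / ((k:ℝ) + 1))) atTop (𝓝 0) := by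
    have h0 : Tendsto (fun k : ℕ => 1 / ((k : ℝ) + 1)) atTop (𝓝 0) :=
      tendsto_one_div_add_atTop_nhds_zero_nat
    simpa using h0.const_mul (1 + ‖x‖)
  exact squeeze_zero (fun k => norm_nonneg _) hb hg

end Key

/-- A vector `x` is *recurrent* for a set `Γ` of bounded linear operators if there is a
sequence `(T_k)` of operators in `Γ` with `T_k x → x`. -/
def IsRecurrentVector {X : Type*} [NormedAddCommGroup X] [NormedSpace ℂ X]
    (Γ : Set (X →L[ℂ] X)) (x : X) : Prop :=
  ∃ T : ℕ → X →L[ℂ] X, (∀ k, T k ∈ Γ) ∧ Tendsto (fun k => T k x) atTop (𝓝 x)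

theorem recurrentVector_iff_unimodular_smul {X : Type*} [NormedAddCommGroup X]
    [NormedSpace ℂ X] [CompleteSpace X] (Γ : Set (X →L[ℂ] X))
    (hΓ : ∀ T ∈ Γ, ∀ S ∈ Γ, T * S ∈ Γ)
    (lam : (X →L[ℂ] X) → ℂ)
    (hmod : ∀ T ∈ Γ, ‖lam T‖ = 1)
    (hmul : ∀ T ∈ Γ, ∀ S ∈ Γ, lam (T * S) = lam T * lam S)
    (x : X) :
    IsRecurrentVector Γ x ↔ IsRecurrentVector {A | ∃ T ∈ Γ, A = lam T • T} x := by
  constructor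
  · rintro ⟨u, hu, hconv⟩
    obtain ⟨S, hS, hSconv⟩ := key Γ hΓ lam (fun _ => 1) hmod hmul
      (fun T _ => by simp) (fun T _ S _ => by simp) x u hu (by simpa using hconv)
    refine ⟨fun k => lam (S k) • S k, fun k => ⟨S k, hS k, rfl⟩, ?_⟩
    simpa [ContinuousLinearMap.smul_apply] using hSconv
  · rintro ⟨A, hA, hconv⟩
    choose T hTΓ hAT using hA
    have hconv' : Tendsto (fun k => lam (T k) • T k x) atTop (𝓝 x) := by
      have : ∀ k, A k x = lam (T k) • T k x := by
        intro k; rw [hAT k]; simp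
      simpa [this] using hconv
    obtain ⟨S, hS, hSconv⟩ := key Γ hΓ (fun T => (starRingEnd ℂ) (lam T)) lam
      (fun T hT => by simp only [Complex.norm_conj, hmod T hT])
      (fun T hT S hS => by simp only [hmul T hT S hS, map_mul]) hmod hmul x T hTΓ hconv'
    refine ⟨S, hS, ?_⟩
    have hone : ∀ k, (starRingEnd ℂ) (lam (S k)) * lam (S k) = 1 := by
      intro k
      have : (starRingEnd ℂ) (lam (S k)) * lam (S k) = ((Complex.normSq (lam (S k)) : ℝ) : ℂ) := by
        rw [mul_comm, Complex.mul_conj]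
      rw [this, Complex.normSq_eq_norm_sq, hmod _ (hS k)]
      norm_num
    have : (fun k => ((fun T => (starRingEnd ℂ) (lam T)) (S k) * lam (S k)) • S k x)
        = fun k => S k x := by
      funext k; rw [hone k, one_smul]
    rwa [this] at hSconv
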